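/- Let I ≥ 2, let g_{ij} = g_{ji} ≥ 0 for i ≠ j and g_{i0} > 0 for each i ∈ {1,…,I}, and define the matrix B ∈ ℝ^{I×I} by B_{ii} = g_{i0} + ∑_{j≠i} g_{ij} and B_{ij} = −g_{ij} for i ≠ j. Then B is invertible, and for all indices n ≠ m there is no scalar π such that the constant row vector (π, π, …, π) satisfies (π,…,π)·B = e_nᵀ − e_mᵀ; equivalently, the vector (e_n − e_m)ᵀ B^{−1} is never a constant vector. -/
import Mathlib


open Finset

/-- The nodal admittance matrix `B` of a DC network with nonnegative symmetric
line conductances `g i j` (for `i ≠ j`) and strictly positive grounding conductances `g0 i`,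
given by `B i i = g0 i + ∑_{j ≠ i} g i j` and `B i j = -g i j` for `i ≠ j`, is invertible, and
for all `n ≠ m` no constant row vector `(c, …, c)` satisfies `(c, …, c) ⬝ B = eₙᵀ - eₘᵀ`;
equivalently `(eₙ - eₘ)ᵀ B⁻¹` is never a constant vector. -/
theorem stmt_7 (I : ℕ) (hI : 2 ≤ I)
    (g : Fin I → Fin I → ℝ) (g0 : Fin I → ℝ)
    (hgsym : ∀ i j, i ≠ j → g i j = g j i)
    (hg : ∀ i j, i ≠ j → 0 ≤ g i j)
    (hg0 : ∀ i, 0 < g0 i)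
    (B : Matrix (Fin I) (Fin I) ℝ)
    (hB : ∀ i j, B i j =
      if i = j then g0 i + ∑ j' ∈ Finset.univ.erase i, g i j' else -g i j) :
    IsUnit B ∧
      ∀ n m : Fin I, n ≠ m →
        ¬ ∃ c : ℝ, Matrix.vecMul (fun _ => c) B
            = (Pi.single n 1 - Pi.single m 1 : Fin I → ℝ) := by
  constructor
  · rw [Matrix.isUnit_iff_isUnit_det, isUnit_iff_ne_zero]
    apply det_ne_zero_of_sum_row_lt_diag
    intro k
    have hs : ∑ j ∈ Finset.univ.erase k, ‖B k j‖
        = ∑ j ∈ Finset.univ.erase k, g k j := by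
      apply Finset.sum_congr rfl
      intro j hj
      have hkj : k ≠ j := (Finset.ne_of_mem_erase hj).symm
      rw [hB k j, if_neg hkj, norm_neg, Real.norm_eq_abs,
        abs_of_nonneg (hg k j hkj)]
    have hsum : (0:ℝ) ≤ ∑ j ∈ Finset.univ.erase k, g k j :=
      Finset.sum_nonneg fun j hj => hg k j (Finset.ne_of_mem_erase hj).symm
    rw [hs, hB k k, if_pos rfl, Real.norm_eq_abs,
      abs_of_pos (by linarith [hg0 k])]
    linarith [hg0 k]
  · rintro n m hnm ⟨c, hc⟩
    have key : ∀ j, Matrix.vecMul (fun _ => c) B j = c * g0 j := by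
      intro j
      have hcol : ∑ i, B i j = g0 j := by
        rw [← Finset.add_sum_erase _ _ (Finset.mem_univ j), hB j j, if_pos rfl]
        have h1 : ∑ i ∈ Finset.univ.erase j, B i j
            = -∑ i ∈ Finset.univ.erase j, g j i := by
          rw [← Finset.sum_neg_distrib]
          apply Finset.sum_congr rfl
          intro i hi
          have hij : i ≠ j := Finset.ne_of_mem_erase hi
          rw [hB i j, if_neg hij, hgsym i j hij]
        rw [h1]; ring
      simp only [Matrix.vecMul, dotProduct]
      rw [← Finset.mul_sum, hcol]
    have hn := congrFun hc n
    have hm := congrFun hc m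
    rw [key] at hn hm
    simp only [Pi.sub_apply, Pi.single_eq_same, Pi.single_eq_of_ne hnm,
      Pi.single_eq_of_ne hnm.symm] at hn hm
    have h1 : c * g0 n = 1 := by linarith
    have h2 : c * g0 m = -1 := by linarith
    nlinarith [hg0 n, hg0 m]
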